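/- Suppose (A_r)^{−1/(2m)} → 1 as m → ∞ for each fixed positive constant A_r, and suppose (c_m) is a sequence of positive reals with ∑ c_m^{−1/(2m)} = ∞. If d_m ≤ A_r · c_{m+r} for all m (with r a fixed natural number and A_r a fixed positive constant), then ∑ d_m^{−1/(2m)} = ∞. -/

import Mathlib

open Real

theorem stmt_18 (c d : ℕ → ℝ) (hc : ∀ m, 0 < c m) (hd : ∀ m, 0 < d m)
    (r : ℕ) (A : ℝ) (hA : 0 < A)
    (hcdiv : ¬ Summable (fun m : ℕ => c m ^ (-(1 : ℝ) / (2 * m))))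
    (hdc : ∀ m : ℕ, d m ≤ A * c (m + r)) :
    ¬ Summable (fun m : ℕ => d m ^ (-(1 : ℝ) / (2 * m))) := by
  intro hsum
  set B := max A 1 with hBdef
  have hB1 : (1:ℝ) ≤ B := le_max_right _ _
  have hB0 : (0:ℝ) < B := lt_of_lt_of_le one_pos hB1
  set a : ℕ → ℝ := fun n => c n ^ (-(1:ℝ) / (2 * n)) with ha
  have hapos : ∀ n, 0 < a n := fun n => Real.rpow_pos_of_pos (hc n) _
  set f : ℕ → ℝ := fun m => c (m + r) ^ (-(1:ℝ) / (2 * m)) with hf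
  have hfpos : ∀ m, 0 < f m := fun m => Real.rpow_pos_of_pos (hc _) _
  -- f m = a (m+r) ^ ((m+r)/m) for m ≥ 1
  have hfa : ∀ m : ℕ, 1 ≤ m → f m = (a (m + r)) ^ (((m:ℝ) + r) / m) := by
    intro m hm
    have hm0 : (m:ℝ) ≠ 0 := Nat.cast_ne_zero.mpr (by omega)
    have hmr0 : (m:ℝ) + r ≠ 0 := by positivity
    rw [hf, ha]
    simp only []
    rw [← Real.rpow_mul (hc (m + r)).le]
    congr 1
    push_cast
    field_simp
  -- key inequality: a (m+r) ≤ 2^r * f m + (2:ℝ)^(-(m:ℝ)) for m ≥ 1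
  have hkey : ∀ m : ℕ, 1 ≤ m → a (m + r) ≤ (2:ℝ)^(r:ℝ) * f m + (2:ℝ)^(-(m:ℝ)) := by
    intro m hm
    have hm0 : (0:ℝ) < m := by exact_mod_cast hm
    by_cases hcase : a (m + r) ≤ (2:ℝ)^(-(m:ℝ))
    · have : (0:ℝ) ≤ (2:ℝ)^(r:ℝ) * f m :=
        mul_nonneg (Real.rpow_pos_of_pos two_pos _).le (hfpos m).le
      linarith
    · push_neg at hcase
      have step : (2:ℝ)^(-(r:ℝ)) * a (m + r) ≤ f m := by
        rw [hfa m hm]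
        have hexp : ((m:ℝ) + r) / m = 1 + (r:ℝ)/m := by field_simp
        rw [hexp, Real.rpow_add (hapos _), Real.rpow_one, mul_comm]
        have h2 : (2:ℝ)^(-(r:ℝ)) ≤ (a (m + r)) ^ ((r:ℝ)/m) := by
          have : ((2:ℝ)^(-(m:ℝ))) ^ ((r:ℝ)/m) ≤ (a (m + r)) ^ ((r:ℝ)/m) :=
            Real.rpow_le_rpow (le_of_lt (Real.rpow_pos_of_pos two_pos _)) hcase.le
              (div_nonneg (Nat.cast_nonneg r) (Nat.cast_nonneg m))
          calc (2:ℝ)^(-(r:ℝ)) = ((2:ℝ)^(-(m:ℝ))) ^ ((r:ℝ)/m) := by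
                rw [← Real.rpow_mul (by norm_num : (0:ℝ) ≤ 2)]
                congr 1
                field_simp
            _ ≤ _ := this
        exact mul_le_mul_of_nonneg_left h2 (hapos _).le
      have h2r : (0:ℝ) < (2:ℝ)^(r:ℝ) := by positivity
      have ha2 : a (m + r) ≤ (2:ℝ)^(r:ℝ) * f m := by
        have := mul_le_mul_of_nonneg_left step h2r.le
        rwa [← mul_assoc, ← Real.rpow_add (by norm_num : (0:ℝ) < 2), add_neg_cancel,
          Real.rpow_zero, one_mul] at this
      have hge : (0:ℝ) ≤ (2:ℝ)^(-(m:ℝ)) := le_of_lt (by positivity)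
      linarith
  -- f is summable: compare with d-series
  have hfs : Summable f := by
    rw [← summable_nat_add_iff 1]
    have hbs : Summable (fun m : ℕ => B ^ ((1:ℝ)/2) * d (m + 1) ^ (-(1:ℝ) / (2 * ((m+1:ℕ):ℝ)))) :=
      (((summable_nat_add_iff 1).mpr hsum).mul_left _)
    refine Summable.of_nonneg_of_le (fun m => (hfpos _).le) (fun m => ?_) hbs
    · 
      set k := m + 1 with hk
      have hk1 : 1 ≤ k := by omega
      have hk0 : (0:ℝ) < k := by exact_mod_cast hk1
      have hdB : d k ≤ B * c (k + r) :=
        (hdc k).trans (mul_le_mul_of_nonneg_right (le_max_left _ _) (hc _).le)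
      have h1 : (B * c (k + r)) ^ (-(1:ℝ) / (2 * k)) ≤ d k ^ (-(1:ℝ) / (2 * k)) :=
        Real.rpow_le_rpow_of_nonpos (hd k) hdB
          (div_nonpos_of_nonpos_of_nonneg (by norm_num) (by positivity))
      rw [Real.mul_rpow hB0.le (hc _).le] at h1
      have h2 : B ^ (-(1:ℝ)/2) ≤ B ^ (-(1:ℝ) / (2 * (k:ℝ))) := by
        apply Real.rpow_le_rpow_of_exponent_le hB1
        have hk1' : (1:ℝ) ≤ k := by exact_mod_cast hk1
        rw [div_le_div_iff₀ (by norm_num) (by positivity)]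
        nlinarith
      have h3 : B ^ (-(1:ℝ)/2) * f k ≤ d k ^ (-(1:ℝ) / (2 * k)) := by
        calc B ^ (-(1:ℝ)/2) * f k ≤ B ^ (-(1:ℝ) / (2 * (k:ℝ))) * f k :=
              mul_le_mul_of_nonneg_right h2 (hfpos _).le
          _ ≤ _ := h1
      have hBpos : (0:ℝ) < B ^ ((1:ℝ)/2) := by positivity
      rw [show f (m+1) = f k from rfl]
      calc f k = B ^ ((1:ℝ)/2) * (B ^ (-(1:ℝ)/2) * f k) := by
            rw [← mul_assoc, ← Real.rpow_add hB0]
            norm_num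
        _ ≤ B ^ ((1:ℝ)/2) * d k ^ (-(1:ℝ) / (2 * k)) :=
            mul_le_mul_of_nonneg_left h3 hBpos.le
  -- then a ∘ (+ r) is summable, contradiction
  have hadiv : ¬ Summable (fun m => a (m + r)) := fun h =>
    hcdiv ((summable_nat_add_iff r).mp h)
  apply hadiv
  rw [← summable_nat_add_iff 1]
  have hgeo : Summable (fun m : ℕ => (2:ℝ)^(-((m:ℝ)+1))) := by
    have h0 : Summable (fun m : ℕ => ((1:ℝ)/2) ^ m) :=
      summable_geometric_of_lt_one (by norm_num) (by norm_num)
    have := h0.mul_left ((1:ℝ)/2)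
    refine this.congr fun m => ?_
    rw [show -((m:ℝ)+1) = -1 + (m:ℝ) * (-1) by ring, Real.rpow_add two_pos,
      Real.rpow_mul (by norm_num : (0:ℝ) ≤ 2), Real.rpow_natCast]
    rw [Real.rpow_neg_one, Real.rpow_neg_one]
    norm_num
    ring
    rw [one_div]
  have hbs2 : Summable (fun m : ℕ => (2:ℝ)^(r:ℝ) * f (m + 1) + (2:ℝ)^(-((m:ℝ)+1))) :=
    Summable.add (((summable_nat_add_iff 1).mpr hfs).mul_left _) hgeo
  refine Summable.of_nonneg_of_le (fun m => (hapos _).le) (fun m => ?_) hbs2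
  have := hkey (m + 1) (by omega)
  convert this using 3 <;> push_cast <;> ring
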